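/- Let X be an unbounded metric space admitting a C-coarse median μ_X for some C ≥ 1. Let Y = X × ℝ with the metric dist((x,s),(x',s')) = dist(x,x') + |s − s'|. Then Y does not have a unique coarse median structure: there exist a constant C' ≥ 1 and two C'-coarse medians ν₁ and ν₂ on Y such that for every D ≥ 0 there are points y₁, y₂, y₃ ∈ Y with dist(ν₁(y₁,y₂,y₃), ν₂(y₁,y₂,y₃)) > D. -/

import Mathlib

open Metric Set

universe u

/-- A `C`-coarse median on a metric space `X`. -/
def IsCoarseMedian {X : Type*} [MetricSpace X] (C : ℝ) (μ : X → X → X → X) : Prop :=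
  (∀ x y z : X, μ x y z = μ y x z) ∧
  (∀ x y z : X, μ x y z = μ x z y) ∧
  (∀ x y : X, μ x x y = x) ∧
  (∀ x y z w : X, dist (μ (μ x w y) w z) (μ x w (μ y w z)) ≤ C) ∧
  (∀ x y z w : X, dist (μ x y z) (μ w y z) ≤ C * dist x w + C)

/-- The coarse median interval `[x,y]_μ = {μ x y z : z ∈ X}`. -/
def cmInterval {X : Type*} [MetricSpace X] (μ : X → X → X → X) (x y : X) : Set X :=
  {w : X | ∃ z : X, μ x y z = w}

/-- The closed `R`-neighbourhood `{x : dist(x, A) ≤ R}` of a set. -/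
def closedNbhd {X : Type*} [MetricSpace X] (R : ℝ) (A : Set X) : Set X :=
  {x : X | Metric.infDist x A ≤ R}

/-- `A` is `D`-quasiconvex with respect to the coarse median `μ`. -/
def IsCMQuasiconvex {X : Type*} [MetricSpace X] (μ : X → X → X → X) (D : ℝ) (A : Set X) :
    Prop :=
  ∀ a₁ ∈ A, ∀ a₂ ∈ A, cmInterval μ a₁ a₂ ⊆ closedNbhd D A

/-- A metric space is geodesic if any two points are joined by an isometrically embedded
compact real interval. -/
def IsGeodesicSpace (X : Type*) [MetricSpace X] : Prop :=
  ∀ x y : X, ∃ γ : ℝ → X, γ 0 = x ∧ γ (dist x y) = y ∧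
    ∀ s ∈ Set.Icc (0 : ℝ) (dist x y), ∀ t ∈ Set.Icc (0 : ℝ) (dist x y),
      dist (γ s) (γ t) = |s - t|

/-- An `(L, A)`-quasigeodesic from `x` to `y`, defined on the interval `[a, b]`. -/
def IsQuasigeodesicOn {X : Type*} [MetricSpace X] (L A a b : ℝ) (γ : ℝ → X) (x y : X) :
    Prop :=
  a ≤ b ∧ γ a = x ∧ γ b = y ∧
    ∀ s ∈ Set.Icc a b, ∀ t ∈ Set.Icc a b,
      |s - t| / L - A ≤ dist (γ s) (γ t) ∧ dist (γ s) (γ t) ≤ L * |s - t| + A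

/-- The Gromov product `⟨y,z⟩_x`. -/
noncomputable def gromovProd {X : Type*} [MetricSpace X] (x y z : X) : ℝ :=
  (dist x y + dist x z - dist y z) / 2

/-- `X` is `δ`-hyperbolic (four-point condition on Gromov products). -/
def IsDeltaHyperbolic (X : Type*) [MetricSpace X] (δ : ℝ) : Prop :=
  ∀ w x y z : X, min (gromovProd w x y) (gromovProd w y z) ≤ gromovProd w x z + δ

section Aux
set_option linter.unusedSectionVars false

noncomputable def med (a b c : ℝ) : ℝ := min (max a b) (min (max a c) (max b c))

set_option maxHeartbeats 1000000 in
theorem med_assoc (x y z w : ℝ) : med (med x w y) w z = med x w (med y w z) := by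
  unfold med
  rcases le_total x w with h1|h1 <;> rcases le_total y w with h2|h2 <;>
    rcases le_total z w with h3|h3 <;> rcases le_total x y with h4|h4 <;>
    rcases le_total x z with h5|h5 <;> rcases le_total y z with h6|h6 <;>
    simp only [*, min_eq_left, min_eq_right, max_eq_left, max_eq_right, le_refl,
      min_self, max_self] <;>
    first | rfl | linarith

theorem med_comm12 (a b c : ℝ) : med a b c = med b a c := by
  unfold med; rw [max_comm a b, min_comm (max a c) (max b c)]

theorem med_comm23 (a b c : ℝ) : med a b c = med a c b := by
  unfold med; rw [max_comm b c, min_left_comm]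

theorem med_idem (a b : ℝ) : med a a b = a := by
  simp [med, min_eq_left (le_max_left a b)]

set_option maxHeartbeats 1000000 in
theorem med_lip (a a' b c : ℝ) : |med a b c - med a' b c| ≤ |a - a'| := by
  unfold med
  rcases le_total a a' with h1|h1 <;> rcases le_total a b with h2|h2 <;>
    rcases le_total a c with h3|h3 <;> rcases le_total a' b with h4|h4 <;>
    rcases le_total a' c with h5|h5 <;> rcases le_total b c with h6|h6 <;>
    simp only [*, min_eq_left, min_eq_right, max_eq_left, max_eq_right, le_refl,
      min_self, max_self] <;>
    (rw [abs_sub_le_iff]; rcases abs_cases (a - a') with ⟨h,h'⟩|⟨h,h'⟩ <;>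
      constructor <;> linarith)

theorem med_mid (a b c : ℝ) (h1 : a ≤ b) (h2 : b ≤ c) : med a c b = b := by
  have h3 : a ≤ c := h1.trans h2
  simp only [med, min_eq_left, min_eq_right, max_eq_left, max_eq_right, h1, h2, h3, min_self]

variable {X : Type*} [MetricSpace X]

noncomputable def Ymk (a : X) (b : ℝ) : WithLp 1 (X × ℝ) :=
  (WithLp.equiv 1 (X × ℝ)).symm (a, b)

@[simp] theorem Ymk_fst (a : X) (b : ℝ) : (Ymk a b).fst = a := rfl
@[simp] theorem Ymk_snd (a : X) (b : ℝ) : (Ymk a b).snd = b := rfl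

theorem Ydist (p q : WithLp 1 (X × ℝ)) : dist p q = dist p.fst q.fst + |p.snd - q.snd| := by
  have h := WithLp.prod_dist_eq_add (p := 1) (by norm_num) p q
  simpa [Real.dist_eq] using h

noncomputable def nu1 (μX : X → X → X → X) (p q r : WithLp 1 (X × ℝ)) : WithLp 1 (X × ℝ) :=
  Ymk (μX p.fst q.fst r.fst) (med p.snd q.snd r.snd)

noncomputable def phi (x₀ : X) (p : WithLp 1 (X × ℝ)) : WithLp 1 (X × ℝ) :=
  Ymk p.fst (p.snd + dist p.fst x₀)

noncomputable def psi (x₀ : X) (p : WithLp 1 (X × ℝ)) : WithLp 1 (X × ℝ) :=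
  Ymk p.fst (p.snd - dist p.fst x₀)

theorem psi_phi (x₀ : X) (p : WithLp 1 (X × ℝ)) : psi x₀ (phi x₀ p) = p := by
  show Ymk p.fst (p.snd + dist p.fst x₀ - dist p.fst x₀) = p
  rw [add_sub_cancel_right]; rfl

theorem phi_psi (x₀ : X) (p : WithLp 1 (X × ℝ)) : phi x₀ (psi x₀ p) = p := by
  show Ymk p.fst (p.snd - dist p.fst x₀ + dist p.fst x₀) = p
  rw [sub_add_cancel]; rfl

theorem phi_lip (x₀ : X) (p q : WithLp 1 (X × ℝ)) :
    dist (phi x₀ p) (phi x₀ q) ≤ 2 * dist p q := by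
  rw [Ydist, Ydist]
  simp only [phi, Ymk_fst, Ymk_snd]
  have h1 := abs_dist_sub_le p.fst q.fst x₀
  have h2 : |p.snd + dist p.fst x₀ - (q.snd + dist q.fst x₀)| ≤
      |p.snd - q.snd| + |dist p.fst x₀ - dist q.fst x₀| := by
    have := abs_add_le (p.snd - q.snd) (dist p.fst x₀ - dist q.fst x₀)
    calc |p.snd + dist p.fst x₀ - (q.snd + dist q.fst x₀)|
        = |(p.snd - q.snd) + (dist p.fst x₀ - dist q.fst x₀)| := by ring_nf
      _ ≤ _ := this
  have h3 : (0:ℝ) ≤ |p.snd - q.snd| := abs_nonneg _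
  linarith [dist_nonneg (x := p.fst) (y := q.fst)]

theorem psi_lip (x₀ : X) (p q : WithLp 1 (X × ℝ)) :
    dist (psi x₀ p) (psi x₀ q) ≤ 2 * dist p q := by
  rw [Ydist, Ydist]
  simp only [psi, Ymk_fst, Ymk_snd]
  have h1 := abs_dist_sub_le q.fst p.fst x₀
  have h2 : |p.snd - dist p.fst x₀ - (q.snd - dist q.fst x₀)| ≤
      |p.snd - q.snd| + |dist q.fst x₀ - dist p.fst x₀| := by
    have := abs_add_le (p.snd - q.snd) (dist q.fst x₀ - dist p.fst x₀)
    calc |p.snd - dist p.fst x₀ - (q.snd - dist q.fst x₀)|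
        = |(p.snd - q.snd) + (dist q.fst x₀ - dist p.fst x₀)| := by ring_nf
      _ ≤ _ := this
  have h3 : (0:ℝ) ≤ |p.snd - q.snd| := abs_nonneg _
  have h4 : dist q.fst p.fst = dist p.fst q.fst := dist_comm _ _
  linarith [dist_nonneg (x := p.fst) (y := q.fst)]

theorem nu1_coarse (C : ℝ) (hC : 1 ≤ C) (μX : X → X → X → X)
    (hμX : IsCoarseMedian C μX) : IsCoarseMedian C (nu1 μX) := by
  obtain ⟨hc1, hc2, hid, hcm1, hcm2⟩ := hμX
  refine ⟨?_, ?_, ?_, ?_, ?_⟩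
  · intro x y z; unfold nu1; rw [hc1, med_comm12]
  · intro x y z; unfold nu1; rw [hc2, med_comm23]
  · intro x y; unfold nu1; rw [hid, med_idem]; rfl
  · intro x y z w
    rw [Ydist]
    simp only [nu1, Ymk_fst, Ymk_snd]
    rw [med_assoc, sub_self, abs_zero, add_zero]
    exact hcm1 x.fst y.fst z.fst w.fst
  · intro x y z w
    rw [Ydist, Ydist]
    simp only [nu1, Ymk_fst, Ymk_snd]
    have h1 := hcm2 x.fst y.fst z.fst w.fst
    have h2 := med_lip x.snd w.snd y.snd z.snd
    have h3 : (0:ℝ) ≤ |x.snd - w.snd| := abs_nonneg _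
    nlinarith [dist_nonneg (x := x.fst) (y := w.fst)]

theorem coarse_mono {C C' : ℝ} (h : C ≤ C') (μ : (WithLp 1 (X × ℝ)) → _ → _ → _)
    (hμ : IsCoarseMedian C μ) : IsCoarseMedian C' μ := by
  obtain ⟨hc1, hc2, hid, hcm1, hcm2⟩ := hμ
  refine ⟨hc1, hc2, hid, fun x y z w => (hcm1 x y z w).trans h, fun x y z w => ?_⟩
  have := hcm2 x y z w
  nlinarith [dist_nonneg (x := x) (y := w)]

noncomputable def nu2 (μX : X → X → X → X) (x₀ : X) (p q r : WithLp 1 (X × ℝ)) :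
    WithLp 1 (X × ℝ) :=
  psi x₀ (nu1 μX (phi x₀ p) (phi x₀ q) (phi x₀ r))

theorem nu2_coarse (C : ℝ) (hC : 1 ≤ C) (μX : X → X → X → X)
    (hμX : IsCoarseMedian C μX) (x₀ : X) : IsCoarseMedian (4 * C) (nu2 μX x₀) := by
  have h1 := nu1_coarse C hC μX hμX
  obtain ⟨hc1, hc2, hid, hcm1, hcm2⟩ := h1
  refine ⟨?_, ?_, ?_, ?_, ?_⟩
  · intro x y z; unfold nu2; rw [hc1]
  · intro x y z; unfold nu2; rw [hc2]
  · intro x y; unfold nu2; rw [hid, psi_phi]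
  · intro x y z w
    have e1 : nu2 μX x₀ (nu2 μX x₀ x w y) w z =
        psi x₀ (nu1 μX (nu1 μX (phi x₀ x) (phi x₀ w) (phi x₀ y)) (phi x₀ w) (phi x₀ z)) := by
      unfold nu2; rw [phi_psi]
    have e2 : nu2 μX x₀ x w (nu2 μX x₀ y w z) =
        psi x₀ (nu1 μX (phi x₀ x) (phi x₀ w) (nu1 μX (phi x₀ y) (phi x₀ w) (phi x₀ z))) := by
      unfold nu2; rw [phi_psi]
    rw [e1, e2]
    have h2 := psi_lip x₀ (nu1 μX (nu1 μX (phi x₀ x) (phi x₀ w) (phi x₀ y)) (phi x₀ w) (phi x₀ z))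
      (nu1 μX (phi x₀ x) (phi x₀ w) (nu1 μX (phi x₀ y) (phi x₀ w) (phi x₀ z)))
    have h3 := hcm1 (phi x₀ x) (phi x₀ y) (phi x₀ z) (phi x₀ w)
    linarith
  · intro x y z w
    unfold nu2
    have h2 := psi_lip x₀ (nu1 μX (phi x₀ x) (phi x₀ y) (phi x₀ z))
      (nu1 μX (phi x₀ w) (phi x₀ y) (phi x₀ z))
    have h3 := hcm2 (phi x₀ x) (phi x₀ y) (phi x₀ z) (phi x₀ w)
    have h4 := phi_lip x₀ x w
    nlinarith [dist_nonneg (x := phi x₀ x) (y := phi x₀ w), dist_nonneg (x := x) (y := w)]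

end Aux

/-- Remark 4.8: if `X` is an unbounded coarse median space, then `X × ℝ` with the `ℓ¹`
product metric does not have a unique coarse median structure. -/
theorem product_with_line_not_unique_coarse_median
    {X : Type*} [MetricSpace X]
    (hX : ∀ R : ℝ, ∃ x y : X, R < dist x y)
    (C : ℝ) (hC : 1 ≤ C) (μX : X → X → X → X) (hμX : IsCoarseMedian C μX) :
    ∃ C' : ℝ, 1 ≤ C' ∧
      ∃ ν₁ ν₂ : WithLp 1 (X × ℝ) → WithLp 1 (X × ℝ) → WithLp 1 (X × ℝ) → WithLp 1 (X × ℝ),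
        IsCoarseMedian C' ν₁ ∧ IsCoarseMedian C' ν₂ ∧
        ∀ D : ℝ, 0 ≤ D → ∃ y₁ y₂ y₃ : WithLp 1 (X × ℝ),
          D < dist (ν₁ y₁ y₂ y₃) (ν₂ y₁ y₂ y₃) := by
  obtain ⟨x₀, -, -⟩ := hX 0
  refine ⟨4 * C, by linarith, nu1 μX, nu2 μX x₀,
    coarse_mono (by linarith) _ (nu1_coarse C hC μX hμX), nu2_coarse C hC μX hμX x₀, ?_⟩
  intro D hD
  set R : ℝ := D + 1 with hR
  have hRpos : (0:ℝ) ≤ R := by linarith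
  obtain ⟨a, b, hab⟩ := hX (2 * R)
  have hx : ∃ x : X, R < dist x₀ x := by
    by_contra hcon; push_neg at hcon
    have ht := dist_triangle a x₀ b
    have h1 := hcon a; have h2 := hcon b
    rw [dist_comm] at h1
    linarith
  obtain ⟨x, hxR⟩ := hx
  refine ⟨Ymk x₀ 0, Ymk x 0, Ymk x₀ R, ?_⟩
  have e1 : nu1 μX (Ymk x₀ 0) (Ymk x 0) (Ymk x₀ R) = Ymk x₀ 0 := by
    unfold nu1
    simp only [Ymk_fst, Ymk_snd]
    rw [hμX.2.1, hμX.2.2.1, med_idem]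
  have e2 : nu2 μX x₀ (Ymk x₀ 0) (Ymk x 0) (Ymk x₀ R) = Ymk x₀ R := by
    unfold nu2 phi nu1 psi
    simp only [Ymk_fst, Ymk_snd, dist_self, add_zero, zero_add]
    rw [hμX.2.1, hμX.2.2.1]
    have hle : R ≤ dist x x₀ := by rw [dist_comm]; exact hxR.le
    rw [med_mid 0 R (dist x x₀) hRpos hle]
    simp [dist_self]
  rw [e1, e2, Ydist]
  simp only [Ymk_fst, Ymk_snd, dist_self, zero_add]
  rw [zero_sub, abs_neg, abs_of_nonneg hRpos]
  linarith
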